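/- Let B₁ = [[0,-1,-1],[-1,1,1-n],[-1,1-n,1]] and B₂ = [[0,-1,-1],[-1,2-n,0],[-1,0,2-n]] in M₃(ℤ) for n ≥ 2. Then the cokernel of the map (B₁ B₂): ℤ⁶ → ℤ³ is isomorphic to ℤ/2, the quotient ker(B₁ B₂)/im(−B₂; B₁) is isomorphic to ℤ/2, and ker(−B₂; B₁) = 0. -/

import Mathlib

def psiF (n : ℤ) : (Fin 3 → ℤ) →ₗ[ℤ] ZMod 2 where
  toFun w := ((n * w 0 + w 1 + w 2 : ℤ) : ZMod 2)
  map_add' a b := by simp only [Pi.add_apply]; push_cast; ring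
  map_smul' c a := by
    simp only [Pi.smul_apply, smul_eq_mul, RingHom.id_apply, zsmul_eq_mul]
    push_cast; ring

def chiF : ((Fin 3 → ℤ) × (Fin 3 → ℤ)) →ₗ[ℤ] ZMod 2 where
  toFun p := ((p.1 1 + p.2 0 + p.2 2 : ℤ) : ZMod 2)
  map_add' a b := by
    simp only [Prod.fst_add, Prod.snd_add, Pi.add_apply]; push_cast; ring
  map_smul' c a := by
    simp only [Prod.smul_fst, Prod.smul_snd]
    simp only [Pi.smul_apply, smul_eq_mul, RingHom.id_apply, zsmul_eq_mul]
    push_cast; ring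

@[simp] lemma psiF_apply (n : ℤ) (w : Fin 3 → ℤ) :
    psiF n w = ((n * w 0 + w 1 + w 2 : ℤ) : ZMod 2) := rfl

@[simp] lemma chiF_apply (p : (Fin 3 → ℤ) × (Fin 3 → ℤ)) :
    chiF p = ((p.1 1 + p.2 0 + p.2 2 : ℤ) : ZMod 2) := rfl

set_option maxHeartbeats 1000000 in
/-- For `B₁ = [[0,-1,-1],[-1,1,1-n],[-1,1-n,1]]` and
`B₂ = [[0,-1,-1],[-1,2-n,0],[-1,0,2-n]]` with `n ≥ 2`: the cokernel of
`(B₁ B₂) : ℤ⁶ → ℤ³` is `ℤ/2`, the quotient `ker(B₁ B₂)/im(−B₂; B₁)` is `ℤ/2`,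
and `ker(−B₂; B₁) = 0`. -/
theorem stmt_15 (n : ℕ) (hn : 2 ≤ n)
    (B₁ B₂ : Matrix (Fin 3) (Fin 3) ℤ)
    (hB₁ : B₁ = !![0, -1, -1; -1, 1, 1 - (n : ℤ); -1, 1 - (n : ℤ), 1])
    (hB₂ : B₂ = !![0, -1, -1; -1, 2 - (n : ℤ), 0; -1, 0, 2 - (n : ℤ)]) :
    Nonempty
      (((Fin 3 → ℤ) ⧸ LinearMap.range
          ((Matrix.toLin' B₁).coprod (Matrix.toLin' B₂))) ≃+ ZMod 2) ∧
    Nonempty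
      ((LinearMap.ker ((Matrix.toLin' B₁).coprod (Matrix.toLin' B₂)) ⧸
          Submodule.comap (LinearMap.ker ((Matrix.toLin' B₁).coprod (Matrix.toLin' B₂))).subtype
            (LinearMap.range ((Matrix.toLin' (-B₂)).prod (Matrix.toLin' B₁)))) ≃+ ZMod 2) ∧
    LinearMap.ker ((Matrix.toLin' (-B₂)).prod (Matrix.toLin' B₁)) = ⊥ := by
  subst hB₁ hB₂
  have hn' : (2 : ℤ) ≤ (n : ℤ) := by exact_mod_cast hn
  have hnz : (n : ℤ) ≠ 0 := by omega
  set f : ((Fin 3 → ℤ) × (Fin 3 → ℤ)) →ₗ[ℤ] (Fin 3 → ℤ) :=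
    (Matrix.toLin' !![0, -1, -1; -1, 1, 1 - (n : ℤ); -1, 1 - (n : ℤ), 1]).coprod
      (Matrix.toLin' !![0, -1, -1; -1, 2 - (n : ℤ), 0; -1, 0, 2 - (n : ℤ)]) with hf
  set g : (Fin 3 → ℤ) →ₗ[ℤ] ((Fin 3 → ℤ) × (Fin 3 → ℤ)) :=
    (Matrix.toLin' (-(!![0, -1, -1; -1, 2 - (n : ℤ), 0; -1, 0, 2 - (n : ℤ)]))).prod
      (Matrix.toLin' !![0, -1, -1; -1, 1, 1 - (n : ℤ); -1, 1 - (n : ℤ), 1]) with hg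
  -- ====== Part 1 ======
  have hker1 : LinearMap.range f = LinearMap.ker (psiF (n : ℤ)) := by
    apply le_antisymm
    · rintro w ⟨⟨u, v⟩, rfl⟩
      simp only [LinearMap.mem_ker, psiF_apply]
      have hval : (n : ℤ) * f (u, v) 0 + f (u, v) 1 + f (u, v) 2
          = 2 * (-(u 0) - v 0 + (1 - (n : ℤ)) * (u 1 + u 2 + v 1 + v 2)) := by
        simp [hf, Matrix.toLin'_apply, Matrix.mulVec, dotProduct, Fin.sum_univ_three]
        ring
      rw [hval, ZMod.intCast_zmod_eq_zero_iff_dvd]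
      exact Dvd.intro _ rfl
    · intro w hw
      simp only [LinearMap.mem_ker, psiF_apply, ZMod.intCast_zmod_eq_zero_iff_dvd] at hw
      obtain ⟨k, hk0⟩ := hw
      have hk : (n : ℤ) * w 0 + w 1 + w 2 = 2 * k := by exact_mod_cast hk0
      refine ⟨(![k - w 0 - w 1 - w 2, -(w 2) - (k - w 0 - w 1 - w 2), 0],
               ![0, -(w 0), (k - w 0 - w 1 - w 2) + w 2]), ?_⟩
      funext i
      fin_cases i <;>
        · simp [hf, Matrix.toLin'_apply, Matrix.mulVec, dotProduct, Fin.sum_univ_three]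
          first | ring1 | linear_combination hk | linear_combination -hk
  have hsurj1 : Function.Surjective (psiF (n : ℤ)) := by
    have h01 : ∀ z : ZMod 2, z = 0 ∨ z = 1 := by decide
    intro z
    rcases h01 z with rfl | rfl
    · exact ⟨0, by simp⟩
    · exact ⟨![0, 1, 0], by norm_num [Matrix.cons_val_two]⟩
  -- ====== Part 3 ======
  have hker3 : LinearMap.ker g = ⊥ := by
    rw [eq_bot_iff]
    rintro x hx
    rw [LinearMap.mem_ker] at hx
    have h2 : Matrix.mulVec !![0, -1, -1; -1, 1, 1 - (n : ℤ); -1, 1 - (n : ℤ), 1] x = 0 := by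
      have := congrArg Prod.snd hx
      simpa [hg, Matrix.toLin'_apply] using this
    have e0 : -(x 1) - x 2 = 0 := by
      have := congrFun h2 0
      simp [Matrix.mulVec, dotProduct, Fin.sum_univ_three] at this
      linarith
    have e1 : -(x 0) + x 1 + (1 - (n : ℤ)) * x 2 = 0 := by
      have := congrFun h2 1
      simp [Matrix.mulVec, dotProduct, Fin.sum_univ_three] at this
      linarith
    have e2 : -(x 0) + (1 - (n : ℤ)) * x 1 + x 2 = 0 := by
      have := congrFun h2 2
      simp [Matrix.mulVec, dotProduct, Fin.sum_univ_three] at this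
      linarith
    have h12 : (n : ℤ) * (x 1 - x 2) = 0 := by linear_combination e1 - e2
    have hx12 : x 1 = x 2 := by
      rcases mul_eq_zero.mp h12 with h | h
      · exact absurd h hnz
      · linarith
    have hx1 : x 1 = 0 := by linarith
    have hx2 : x 2 = 0 := by linarith
    have hx0 : x 0 = 0 := by linear_combination -e1 + hx1 + (1 - (n : ℤ)) * hx2
    simp only [Submodule.mem_bot]
    funext i
    fin_cases i <;> assumption
  -- ====== Part 2 ======
  have hKg : ∀ x : Fin 3 → ℤ, chiF (g x) = 0 := by
    intro x
    have hval : ((g x).1 1 + (g x).2 0 + (g x).2 2 : ℤ) = 2 * (-(x 1)) := by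
      simp [hg, Matrix.toLin'_apply, Matrix.mulVec, dotProduct, Fin.sum_univ_three]
      ring
    rw [chiF_apply, hval, ZMod.intCast_zmod_eq_zero_iff_dvd]
    exact Dvd.intro _ rfl
  set K := LinearMap.ker f with hK
  set φ : K →ₗ[ℤ] ZMod 2 := chiF.comp K.subtype with hφ
  have heA : (![(-1 : ℤ), 0, 0], ![(1 : ℤ), 0, 0]) ∈ K := by
    rw [hK, LinearMap.mem_ker]
    funext i
    fin_cases i <;>
      simp [hf, Matrix.toLin'_apply, Matrix.mulVec, dotProduct, Fin.sum_univ_three]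
  have hker2 : Submodule.comap K.subtype (LinearMap.range g) = LinearMap.ker φ := by
    apply le_antisymm
    · rintro ⟨p, hp⟩ hmem
      rw [Submodule.mem_comap] at hmem
      obtain ⟨x, hx⟩ := hmem
      rw [LinearMap.mem_ker, hφ, LinearMap.comp_apply]
      have : K.subtype ⟨p, hp⟩ = g x := hx.symm
      rw [this]
      exact hKg x
    · rintro ⟨⟨u, v⟩, hKm⟩ hmem
      rw [LinearMap.mem_ker, hφ, LinearMap.comp_apply] at hmem
      have hmem' : ((u 1 + v 0 + v 2 : ℤ) : ZMod 2) = 0 := hmem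
      rw [ZMod.intCast_zmod_eq_zero_iff_dvd] at hmem'
      obtain ⟨j, hj0⟩ := hmem'
      have hj : u 1 + v 0 + v 2 = 2 * j := by exact_mod_cast hj0
      have hK' : f (u, v) = 0 := hKm
      have R0 : -(u 1) - u 2 - v 1 - v 2 = 0 := by
        have := congrFun hK' 0
        simp [hf, Matrix.toLin'_apply, Matrix.mulVec, dotProduct,
          Fin.sum_univ_three] at this
        linarith
      have R1 : -(u 0) + u 1 + (1 - (n : ℤ)) * u 2 - v 0 + (2 - (n : ℤ)) * v 1 = 0 := by
        have := congrFun hK' 1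
        simp [hf, Matrix.toLin'_apply, Matrix.mulVec, dotProduct,
          Fin.sum_univ_three] at this
        linarith
      have R2 : -(u 0) + (1 - (n : ℤ)) * u 1 + u 2 - v 0 + (2 - (n : ℤ)) * v 2 = 0 := by
        have := congrFun hK' 2
        simp [hf, Matrix.toLin'_apply, Matrix.mulVec, dotProduct,
          Fin.sum_univ_three] at this
        linarith
      obtain ⟨k, hkdef⟩ : ∃ k : ℤ, k = j - u 1 - v 2 := ⟨_, rfl⟩
      have hu1 : u 1 = v 0 - v 2 - 2 * k := by rw [hkdef]; linarith
      have hu0 : u 0 = -(v 0) := by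
        have h2 : (-2 : ℤ) * (u 0 + v 0) = 0 := by
          linear_combination R1 + R2 + (2 - (n : ℤ)) * R0
        linarith
      have hP2 : (n : ℤ) * u 1 + v 1 + ((n : ℤ) - 1) * v 2 = 0 := by
        have h2 : 2 * ((n : ℤ) * u 1 + v 1 + ((n : ℤ) - 1) * v 2) = 0 := by
          linear_combination R1 - R2 - (n : ℤ) * R0
        linarith
      have hv1 : v 1 = v 2 + (n : ℤ) * (2 * k - v 0) := by
        linear_combination hP2 - (n : ℤ) * hu1
      have hu2 : u 2 = -(v 2) - ((n : ℤ) - 1) * (2 * k - v 0) := by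
        linear_combination -R0 - hu1 - hv1
      rw [Submodule.mem_comap]
      refine ⟨![-(v 2) - ((n : ℤ) - 1) * (k - v 0) + -k, k - v 0, -k], ?_⟩
      have hgoal1 : (g ![-(v 2) - ((n : ℤ) - 1) * (k - v 0) + -k, k - v 0, -k]).1 = u := by
        funext i
        fin_cases i <;>
          · simp [hg, Matrix.toLin'_apply, Matrix.mulVec, dotProduct, Fin.sum_univ_three]
            try first
              | ring1
              | linear_combination hu0 | linear_combination -hu0
              | linear_combination hu1 | linear_combination -hu1
              | linear_combination hu2 | linear_combination -hu2
              | linear_combination hv1 | linear_combination -hv1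
      have hgoal2 : (g ![-(v 2) - ((n : ℤ) - 1) * (k - v 0) + -k, k - v 0, -k]).2 = v := by
        funext i
        fin_cases i <;>
          · simp [hg, Matrix.toLin'_apply, Matrix.mulVec, dotProduct, Fin.sum_univ_three]
            try first
              | ring1
              | linear_combination hu0 | linear_combination -hu0
              | linear_combination hu1 | linear_combination -hu1
              | linear_combination hu2 | linear_combination -hu2
              | linear_combination hv1 | linear_combination -hv1
      exact Prod.ext hgoal1 hgoal2
  have hsurj2 : Function.Surjective φ := by
    have h01 : ∀ z : ZMod 2, z = 0 ∨ z = 1 := by decide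
    intro z
    rcases h01 z with rfl | rfl
    · exact ⟨0, by simp⟩
    · refine ⟨⟨(![(-1 : ℤ), 0, 0], ![(1 : ℤ), 0, 0]), heA⟩, ?_⟩
      show ((((-1 : ℤ)) * 0 + 1 + 0 : ℤ) : ZMod 2) = 1
      norm_num
  refine ⟨⟨((Submodule.quotEquivOfEq _ _ hker1).trans
      ((psiF (n : ℤ)).quotKerEquivOfSurjective hsurj1)).toAddEquiv⟩,
    ⟨((Submodule.quotEquivOfEq _ _ hker2).trans
      (φ.quotKerEquivOfSurjective hsurj2)).toAddEquiv⟩, hker3⟩
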